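/- arXiv:1307.5337 — 2 statements merged into one kernel-verified Lean document; each statement's English description precedes it below -/
import Mathlib

section
/- Let T₁ ∈ B(H₁), T₂ ∈ B(H₂) be polynomially bounded operators and X : H₂ → H₁ a bounded operator such that T₁^N X T₂^N = 0 for some integer N ≥ 0. Then the operator R on H₁ ⊕ H₂ given by the 2×2 upper triangular block matrix with diagonal entries T₁, T₂ and upper-right entry X is polynomially bounded. -/
/-- An operator `T` is polynomially bounded if `‖p(T)‖ ≤ C ‖p‖_∞` for all polynomials. -/
def PolynomiallyBounded {E : Type*} [NormedAddCommGroup E] [NormedSpace ℂ E]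
    (T : E →L[ℂ] E) : Prop :=
  ∃ C > (0 : ℝ), ∀ (p : Polynomial ℂ) (B : ℝ),
    (∀ z : ℂ, ‖z‖ ≤ 1 → ‖Polynomial.eval z p‖ ≤ B) →
    ‖(Polynomial.aeval T p : E →L[ℂ] E)‖ ≤ C * B

open Polynomial Metric Finset ContinuousLinearMap

/-- Cauchy estimate: coefficients of a polynomial bounded by the sup on the unit disk. -/
lemma cauchy_coeff_le (p : ℂ[X]) (B : ℝ) (hB : ∀ z : ℂ, ‖z‖ ≤ 1 → ‖p.eval z‖ ≤ B) (n : ℕ) :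
    ‖p.coeff n‖ ≤ B := by
  set f : ℂ → ℂ := fun z => p.eval z with hf
  have hdiff : Differentiable ℂ f := p.differentiable
  have h1 : HasFPowerSeriesOnBall f (cauchyPowerSeries f 0 1) 0 1 := by
    have := (hdiff.differentiableOn (s := closedBall (0:ℂ) (1:NNReal))).hasFPowerSeriesOnBall
      (R := 1) one_pos
    simpa using this
  set q : FormalMultilinearSeries ℂ ℂ ℂ :=
    FormalMultilinearSeries.ofScalars ℂ (fun n => p.coeff n) with hq
  have hnq : ∀ m, ‖q m‖ = ‖p.coeff m‖ := by
    intro m; rw [hq, FormalMultilinearSeries.ofScalars_norm]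
  have h2 : HasFPowerSeriesOnBall f q 0 1 := by
    constructor
    · -- 1 ≤ q.radius
      apply FormalMultilinearSeries.le_radius_of_bound _
        (∑ i ∈ range (p.natDegree + 1), ‖p.coeff i‖)
      intro m
      rw [hnq]
      simp only [NNReal.coe_one, one_pow, mul_one]
      by_cases hm : m ∈ range (p.natDegree + 1)
      · exact single_le_sum (f := fun i => ‖p.coeff i‖) (fun _ _ => norm_nonneg _) hm
      · rw [p.coeff_eq_zero_of_natDegree_lt (by simpa using hm)]
        simp only [norm_zero]
        exact sum_nonneg fun _ _ => norm_nonneg _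
    · exact one_pos
    · intro y _
      have : ∀ m : ℕ, (q m fun _ => y) = p.coeff m * y ^ m := by
        intro m
        rw [hq, FormalMultilinearSeries.ofScalars_apply_eq, smul_eq_mul]
      rw [funext this]
      have hzero : ∀ m ∉ range (p.natDegree + 1), p.coeff m * y ^ m = 0 := by
        intro m hm
        rw [p.coeff_eq_zero_of_natDegree_lt (by simpa using hm)]; ring
      have hs := hasSum_sum_of_ne_finset_zero (s := range (p.natDegree + 1))
        (f := fun m => p.coeff m * y ^ m) (L := SummationFilter.unconditional ℕ) hzero
      have hev : f (0 + y) = ∑ m ∈ range (p.natDegree + 1), p.coeff m * y ^ m := by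
        rw [zero_add, hf]
        exact p.eval_eq_sum_range y
      rw [hev]
      exact hs
  have heq : cauchyPowerSeries f 0 1 = q :=
    h1.hasFPowerSeriesAt.eq_formalMultilinearSeries h2.hasFPowerSeriesAt
  have h3 := norm_cauchyPowerSeries_le f 0 1 n
  rw [heq, hnq] at h3
  refine h3.trans ?_
  simp only [abs_one, inv_one, one_pow, mul_one]
  have hint : ∫ θ : ℝ in (0)..2 * Real.pi, ‖f (circleMap 0 1 θ)‖ ≤ 2 * Real.pi * B := by
    have : ∫ θ : ℝ in (0)..2 * Real.pi, B = 2 * Real.pi * B := by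
      simp [mul_comm]
    rw [← this]
    apply intervalIntegral.integral_mono_on Real.two_pi_pos.le
    · exact ((p.continuous.comp (continuous_circleMap 0 1)).norm).intervalIntegrable _ _
    · exact intervalIntegrable_const
    · intro θ _
      apply hB
      have := norm_circleMap_zero 1 θ
      simp only [this, abs_one, le_refl]
  calc (2 * Real.pi)⁻¹ * ∫ θ : ℝ in (0)..2 * Real.pi, ‖f (circleMap 0 1 θ)‖
      ≤ (2 * Real.pi)⁻¹ * (2 * Real.pi * B) := by
        apply mul_le_mul_of_nonneg_left hint
        positivity
    _ = B := by field_simp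


lemma max_modulus_poly (q : ℂ[X]) (B : ℝ) (h : ∀ z : ℂ, ‖z‖ = 1 → ‖q.eval z‖ ≤ B) :
    ∀ z : ℂ, ‖z‖ ≤ 1 → ‖q.eval z‖ ≤ B := by
  intro z hz
  apply Complex.norm_le_of_forall_mem_frontier_norm_le (U := ball (0:ℂ) 1) isBounded_ball
    (q.differentiable.diffContOnCl)
  · intro w hw
    rw [frontier_ball (0:ℂ) one_ne_zero] at hw
    exact h w (by simpa [mem_sphere_iff_norm] using hw)
  · rw [closure_ball (0:ℂ) one_ne_zero]
    simpa [mem_closedBall_iff_norm] using hz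


lemma divX_iterate_coeff (p : ℂ[X]) (m n : ℕ) :
    (Polynomial.divX^[m] p).coeff n = p.coeff (n + m) := by
  induction m generalizing n with
  | zero => simp
  | succ m ih =>
    rw [Function.iterate_succ_apply', Polynomial.coeff_divX, ih]
    congr 1; omega

lemma divX_iterate_add (m : ℕ) (p q : ℂ[X]) :
    Polynomial.divX^[m] (p + q) = Polynomial.divX^[m] p + Polynomial.divX^[m] q := by
  ext n; simp [divX_iterate_coeff]

lemma divX_iterate_monomial (m k : ℕ) (a : ℂ) :
    Polynomial.divX^[m] (monomial k a) = if m ≤ k then monomial (k - m) a else 0 := by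
  ext n
  rw [divX_iterate_coeff]
  by_cases h : m ≤ k
  · rw [if_pos h, coeff_monomial, coeff_monomial]
    by_cases h2 : k = n + m
    · rw [if_pos h2, if_pos (by omega)]
    · rw [if_neg h2, if_neg (by omega)]
  · rw [if_neg h, coeff_monomial, coeff_zero, if_neg (by omega)]

lemma eval_divX_iterate (j : ℕ) (p : ℂ[X]) (z : ℂ) :
    z ^ (j + 1) * (Polynomial.divX^[j+1] p).eval z
      = p.eval z - ∑ m ∈ range (j + 1), p.coeff m * z ^ m := by
  induction j generalizing p with
  | zero =>
    have h := congrArg (eval z) p.X_mul_divX_add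
    simp only [eval_add, eval_mul, eval_X, eval_C] at h
    simp only [zero_add, pow_one, Function.iterate_one, sum_range_one, pow_zero, mul_one]
    linear_combination h
  | succ j ih =>
    rw [Function.iterate_succ_apply]
    have h0 : z * (p.divX).eval z = p.eval z - p.coeff 0 := by
      have h := congrArg (eval z) p.X_mul_divX_add
      simp only [eval_add, eval_mul, eval_X, eval_C] at h
      linear_combination h
    have hsum : ∑ x ∈ range (j + 1), z * ((p.divX).coeff x * z ^ x)
        = ∑ x ∈ range (j + 1), p.coeff (x + 1) * z ^ (x + 1) := by
      apply sum_congr rfl; intro x _; rw [Polynomial.coeff_divX]; ring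
    calc z ^ (j + 1 + 1) * (Polynomial.divX^[j+1] p.divX).eval z
        = z * (z ^ (j + 1) * (Polynomial.divX^[j+1] p.divX).eval z) := by ring
      _ = z * ((p.divX).eval z - ∑ m ∈ range (j + 1), (p.divX).coeff m * z ^ m) := by
          rw [ih]
      _ = p.eval z - ∑ m ∈ range (j + 1 + 1), p.coeff m * z ^ m := by
          rw [mul_sub, h0, Finset.sum_range_succ' (fun m => p.coeff m * z ^ m) (j+1),
            Finset.mul_sum, hsum]
          simp only [pow_zero, mul_one]
          ring


section ops
variable {H₁ H₂ : Type*}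
  [NormedAddCommGroup H₁] [NormedSpace ℂ H₁]
  [NormedAddCommGroup H₂] [NormedSpace ℂ H₂]

/-- Upper triangular block operator. -/
noncomputable def triOp (A : H₁ →L[ℂ] H₁) (Y : H₂ →L[ℂ] H₁) (B : H₂ →L[ℂ] H₂) :
    (H₁ × H₂) →L[ℂ] (H₁ × H₂) :=
  ((A.comp (ContinuousLinearMap.fst ℂ H₁ H₂) +
      Y.comp (ContinuousLinearMap.snd ℂ H₁ H₂))).prod
    (B.comp (ContinuousLinearMap.snd ℂ H₁ H₂))

lemma triOp_apply (A : H₁ →L[ℂ] H₁) (Y : H₂ →L[ℂ] H₁) (B : H₂ →L[ℂ] H₂) (x : H₁ × H₂) :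
    triOp A Y B x = (A x.1 + Y x.2, B x.2) := rfl

lemma triOp_one : triOp (1 : H₁ →L[ℂ] H₁) (0 : H₂ →L[ℂ] H₁) (1 : H₂ →L[ℂ] H₂) = 1 := by
  ext x <;> simp [triOp_apply]

lemma triOp_comp (A A' : H₁ →L[ℂ] H₁) (Y Y' : H₂ →L[ℂ] H₁) (B B' : H₂ →L[ℂ] H₂) :
    (triOp A Y B).comp (triOp A' Y' B')
      = triOp (A.comp A') (A.comp Y' + Y.comp B') (B.comp B') := by
  ext x <;> simp [triOp_apply, map_add]

lemma triOp_add (A A' : H₁ →L[ℂ] H₁) (Y Y' : H₂ →L[ℂ] H₁) (B B' : H₂ →L[ℂ] H₂) :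
    triOp A Y B + triOp A' Y' B' = triOp (A + A') (Y + Y') (B + B') := by
  ext x <;> simp [triOp_apply]

lemma triOp_smul (a : ℂ) (A : H₁ →L[ℂ] H₁) (Y : H₂ →L[ℂ] H₁) (B : H₂ →L[ℂ] H₂) :
    a • triOp A Y B = triOp (a • A) (a • Y) (a • B) := by
  ext x <;> simp [triOp_apply]

lemma triOp_norm_le (A : H₁ →L[ℂ] H₁) (Y : H₂ →L[ℂ] H₁) (B : H₂ →L[ℂ] H₂) :
    ‖triOp A Y B‖ ≤ ‖A‖ + ‖Y‖ + ‖B‖ := by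
  apply ContinuousLinearMap.opNorm_le_bound _ (by positivity)
  intro x
  rw [triOp_apply]
  rw [Prod.norm_def]
  simp only [sup_le_iff]
  have h1 : ‖x.1‖ ≤ ‖x‖ := norm_fst_le x
  have h2 : ‖x.2‖ ≤ ‖x‖ := norm_snd_le x
  constructor
  · calc ‖A x.1 + Y x.2‖ ≤ ‖A‖ * ‖x.1‖ + ‖Y‖ * ‖x.2‖ :=
        (norm_add_le _ _).trans (add_le_add (A.le_opNorm _) (Y.le_opNorm _))
    _ ≤ (‖A‖ + ‖Y‖ + ‖B‖) * ‖x‖ := by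
        nlinarith [mul_le_mul_of_nonneg_left h1 (norm_nonneg A),
          mul_le_mul_of_nonneg_left h2 (norm_nonneg Y),
          mul_nonneg (norm_nonneg B) (norm_nonneg x)]
  · calc ‖B x.2‖ ≤ ‖B‖ * ‖x.2‖ := B.le_opNorm _
    _ ≤ (‖A‖ + ‖Y‖ + ‖B‖) * ‖x‖ := by
        nlinarith [mul_le_mul_of_nonneg_left h2 (norm_nonneg B),
          mul_nonneg (norm_nonneg A) (norm_nonneg x),
          mul_nonneg (norm_nonneg Y) (norm_nonneg x)]

variable (T₁ : H₁ →L[ℂ] H₁) (T₂ : H₂ →L[ℂ] H₂) (X : H₂ →L[ℂ] H₁)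

/-- `E j i = T₁^j X T₂^i`. -/
noncomputable def eOp (j i : ℕ) : H₂ →L[ℂ] H₁ := (T₁ ^ j).comp (X.comp (T₂ ^ i))

noncomputable def dOp (k : ℕ) : H₂ →L[ℂ] H₁ :=
  ∑ j ∈ range k, eOp T₁ T₂ X j (k - (j + 1))

noncomputable def deltaOp (p : ℂ[X]) : H₂ →L[ℂ] H₁ :=
  p.sum fun k a => a • dOp T₁ T₂ X k

lemma eOp_comp_right (j i : ℕ) : (eOp T₁ T₂ X j i).comp T₂ = eOp T₁ T₂ X j (i + 1) := by
  ext x; simp [eOp, pow_succ, mul_apply]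

lemma pow_triOp (k : ℕ) : (triOp T₁ X T₂) ^ k = triOp (T₁ ^ k) (dOp T₁ T₂ X k) (T₂ ^ k) := by
  induction k with
  | zero => simp [pow_zero, dOp, triOp_one]
  | succ k ih =>
    rw [pow_succ, ih, ContinuousLinearMap.mul_def, triOp_comp]
    congr 1
    · -- (T₁^k).comp X + (dOp k).comp T₂ = dOp (k+1)
      conv_rhs => rw [dOp]
      rw [Finset.sum_range_succ]
      have : (dOp T₁ T₂ X k).comp T₂ = ∑ j ∈ range k, eOp T₁ T₂ X j (k + 1 - (j + 1)) := by
        rw [dOp, ContinuousLinearMap.finset_sum_comp]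
        apply sum_congr rfl
        intro j hj
        rw [eOp_comp_right]
        congr 1
        have := mem_range.mp hj
        omega
      rw [this]
      rw [add_comm]
      congr 1
      ext x
      simp [eOp]

lemma deltaOp_add (p q : ℂ[X]) :
    deltaOp T₁ T₂ X (p + q) = deltaOp T₁ T₂ X p + deltaOp T₁ T₂ X q := by
  unfold deltaOp
  apply Polynomial.sum_add_index
  · intro k; simp
  · intro k a b; rw [add_smul]

lemma aeval_triOp (p : ℂ[X]) :
    (Polynomial.aeval (triOp T₁ X T₂) p : (H₁ × H₂) →L[ℂ] (H₁ × H₂))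
      = triOp (Polynomial.aeval T₁ p) (deltaOp T₁ T₂ X p) (Polynomial.aeval T₂ p) := by
  induction p using Polynomial.induction_on' with
  | add p q hp hq =>
    rw [map_add, map_add, map_add, hp, hq, deltaOp_add, triOp_add]
  | monomial k a =>
    have hδ : deltaOp T₁ T₂ X (monomial k a) = a • dOp T₁ T₂ X k :=
      Polynomial.sum_monomial_index a _ (by simp)
    rw [aeval_monomial, aeval_monomial, aeval_monomial, hδ, ← Algebra.smul_def,
      ← Algebra.smul_def, ← Algebra.smul_def, pow_triOp, triOp_smul]

variable (N : ℕ)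

lemma eOp_zero (hX : (T₁ ^ N).comp (X.comp (T₂ ^ N)) = 0) (j i : ℕ) (hj : N ≤ j) (hi : N ≤ i) :
    eOp T₁ T₂ X j i = 0 := by
  obtain ⟨a, rfl⟩ := Nat.exists_eq_add_of_le hj
  obtain ⟨b, rfl⟩ := Nat.exists_eq_add_of_le hi
  have : eOp T₁ T₂ X (N + a) (N + b)
      = (T₁ ^ a).comp (((T₁ ^ N).comp (X.comp (T₂ ^ N))).comp (T₂ ^ b)) := by
    ext x
    rw [eOp, add_comm N a]
    simp [pow_add, ContinuousLinearMap.mul_apply]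
  rw [this, hX]
  ext x; simp

/-- Key combinatorial identity for monomials. -/
lemma dOp_key (hX : (T₁ ^ N).comp (X.comp (T₂ ^ N)) = 0) (k : ℕ) :
    dOp T₁ T₂ X k
      = (∑ j ∈ range N, if j + 1 ≤ k then eOp T₁ T₂ X j (k - (j + 1)) else 0)
      + (∑ i ∈ range N, if i + 1 ≤ k then eOp T₁ T₂ X (k - (i + 1)) i else 0)
      - ∑ j ∈ range N, ∑ i ∈ range N,
          (if i + j + 1 = k then eOp T₁ T₂ X j i else 0) := by
  classical
  set g : ℕ → (H₂ →L[ℂ] H₁) := fun j => eOp T₁ T₂ X j (k - (j + 1)) with hg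
  have hS1 : (∑ j ∈ range N, if j + 1 ≤ k then eOp T₁ T₂ X j (k - (j + 1)) else 0)
      = ∑ j ∈ (range k).filter (fun j => j < N), g j := by
    rw [← Finset.sum_filter]
    apply Finset.sum_congr _ (fun _ _ => rfl)
    ext j; simp only [mem_filter, mem_range]; omega
  have hS2 : (∑ i ∈ range N, if i + 1 ≤ k then eOp T₁ T₂ X (k - (i + 1)) i else 0)
      = ∑ j ∈ (range k).filter (fun j => k - (j + 1) < N), g j := by
    rw [← Finset.sum_filter]
    apply Finset.sum_nbij' (fun i => k - (i + 1)) (fun j => k - (j + 1))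
    · intro i hi; simp only [mem_filter, mem_range] at hi ⊢; omega
    · intro j hj; simp only [mem_filter, mem_range] at hj ⊢; omega
    · intro i hi; simp only [mem_filter, mem_range] at hi; omega
    · intro j hj; simp only [mem_filter, mem_range] at hj; omega
    · intro i hi
      simp only [mem_filter, mem_range] at hi
      rw [hg]
      congr 1
      omega
  have hinner : ∀ j ∈ range N,
      (∑ i ∈ range N, if i + j + 1 = k then eOp T₁ T₂ X j i else 0)
        = if j + 1 ≤ k ∧ k - (j + 1) < N then g j else 0 := by
    intro j hj
    by_cases hc : j + 1 ≤ k ∧ k - (j + 1) < N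
    · rw [if_pos hc]
      rw [Finset.sum_eq_single_of_mem (k - (j + 1)) (mem_range.mpr hc.2)]
      · rw [if_pos (by omega)]
      · intro i _ hne
        rw [if_neg (by omega)]
    · rw [if_neg hc]
      apply Finset.sum_eq_zero
      intro i hi
      simp only [mem_range] at hi
      rw [if_neg (by omega)]
  have hS3 : (∑ j ∈ range N, ∑ i ∈ range N, if i + j + 1 = k then eOp T₁ T₂ X j i else 0)
      = ∑ j ∈ (range k).filter (fun j => j < N ∧ k - (j + 1) < N), g j := by
    rw [Finset.sum_congr rfl hinner, ← Finset.sum_filter]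
    apply Finset.sum_congr _ (fun _ _ => rfl)
    ext j; simp only [mem_filter, mem_range]; omega
  rw [hS1, hS2, hS3]
  have hvanish : ∀ j ∈ range k, g j ≠ 0 → (j < N ∨ k - (j + 1) < N) := by
    intro j hj hne
    by_contra hcon
    push_neg at hcon
    exact hne (eOp_zero T₁ T₂ X N hX _ _ (by omega) (by omega))
  have hP : dOp T₁ T₂ X k = ∑ j ∈ (range k).filter (fun j => j < N ∨ k - (j + 1) < N), g j := by
    rw [dOp, Finset.sum_filter_of_ne hvanish]
  have hie : (∑ j ∈ ((range k).filter fun j => j < N) ∪ ((range k).filter fun j => k - (j + 1) < N), g j)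
      + (∑ j ∈ ((range k).filter fun j => j < N) ∩ ((range k).filter fun j => k - (j + 1) < N), g j)
      = (∑ j ∈ (range k).filter fun j => j < N, g j)
        + ∑ j ∈ (range k).filter fun j => k - (j + 1) < N, g j :=
    Finset.sum_union_inter
  rw [← Finset.filter_or, ← Finset.filter_and] at hie
  rw [hP]
  rw [eq_sub_iff_add_eq]
  exact hie

/-- Lemmas from scratch files assumed present: divX_iterate_*, etc. -/
lemma deltaOp_eq (hX : (T₁ ^ N).comp (X.comp (T₂ ^ N)) = 0) (p : ℂ[X]) :
    deltaOp T₁ T₂ X p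
      = (∑ j ∈ range N,
          (T₁ ^ j).comp (X.comp (Polynomial.aeval T₂ (Polynomial.divX^[j+1] p))))
      + (∑ i ∈ range N,
          ((Polynomial.aeval T₁ (Polynomial.divX^[i+1] p) : H₁ →L[ℂ] H₁)).comp
            (X.comp (T₂ ^ i)))
      - ∑ j ∈ range N, ∑ i ∈ range N, p.coeff (i + j + 1) • eOp T₁ T₂ X j i := by
  induction p using Polynomial.induction_on' with
  | add p q hp hq =>
    rw [deltaOp_add, hp, hq]
    simp only [divX_iterate_add, map_add, coeff_add, add_smul, ContinuousLinearMap.comp_add,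
      ContinuousLinearMap.add_comp, Finset.sum_add_distrib]
    abel
  | monomial k a =>
    have hδ : deltaOp T₁ T₂ X (monomial k a) = a • dOp T₁ T₂ X k :=
      Polynomial.sum_monomial_index a _ (by simp)
    have h1 : ∀ j : ℕ,
        (T₁ ^ j).comp (X.comp (Polynomial.aeval T₂ (Polynomial.divX^[j+1] (monomial k a))))
          = a • (if j + 1 ≤ k then eOp T₁ T₂ X j (k - (j + 1)) else 0) := by
      intro j
      rw [divX_iterate_monomial]
      split_ifs with h
      · rw [aeval_monomial, ← Algebra.smul_def]
        ext x
        simp [eOp]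
      · simp
    have h2 : ∀ i : ℕ,
        ((Polynomial.aeval T₁ (Polynomial.divX^[i+1] (monomial k a)) : H₁ →L[ℂ] H₁)).comp
            (X.comp (T₂ ^ i))
          = a • (if i + 1 ≤ k then eOp T₁ T₂ X (k - (i + 1)) i else 0) := by
      intro i
      rw [divX_iterate_monomial]
      split_ifs with h
      · rw [aeval_monomial, ← Algebra.smul_def]
        ext x
        simp [eOp]
      · simp
    have h3 : ∀ j i : ℕ,
        (monomial k a : ℂ[X]).coeff (i + j + 1) • eOp T₁ T₂ X j i
          = a • (if i + j + 1 = k then eOp T₁ T₂ X j i else 0) := by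
      intro j i
      rw [coeff_monomial]
      by_cases h : i + j + 1 = k
      · rw [if_pos (by omega), if_pos h]
      · rw [if_neg (by omega), if_neg h, zero_smul, smul_zero]
    simp only [h1, h2, h3, ← Finset.smul_sum, hδ, ← smul_sub, ← smul_add]
    congr 1
    exact dOp_key T₁ T₂ X N hX k
end ops


set_option maxHeartbeats 2000000 in
/-- If `T₁, T₂` are polynomially bounded and `T₁^N X T₂^N = 0` for some `N`, then the
upper-triangular block operator `[[T₁, X], [0, T₂]]` is polynomially bounded. -/
theorem stmt_10 {H₁ H₂ : Type*}
    [NormedAddCommGroup H₁] [InnerProductSpace ℂ H₁] [CompleteSpace H₁]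
    [NormedAddCommGroup H₂] [InnerProductSpace ℂ H₂] [CompleteSpace H₂]
    (T₁ : H₁ →L[ℂ] H₁) (T₂ : H₂ →L[ℂ] H₂) (X : H₂ →L[ℂ] H₁)
    (h₁ : PolynomiallyBounded T₁) (h₂ : PolynomiallyBounded T₂)
    (N : ℕ) (hX : (T₁ ^ N).comp (X.comp (T₂ ^ N)) = 0) :
    PolynomiallyBounded
      (((T₁.comp (ContinuousLinearMap.fst ℂ H₁ H₂) +
          X.comp (ContinuousLinearMap.snd ℂ H₁ H₂))).prod
        (T₂.comp (ContinuousLinearMap.snd ℂ H₁ H₂))) := by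
  obtain ⟨C₁, hC₁pos, hC₁⟩ := h₁
  obtain ⟨C₂, hC₂pos, hC₂⟩ := h₂
  refine ⟨C₁ + C₂ + 3 * (C₁ * C₂ * (‖X‖ + 1)) * ((N : ℝ) + 2) ^ 2, by positivity, ?_⟩
  intro p B hB
  have hB0 : 0 ≤ B := le_trans (norm_nonneg _) (hB 0 (by simp))
  have hT1pow : ∀ j : ℕ, ‖(T₁ ^ j : H₁ →L[ℂ] H₁)‖ ≤ C₁ := by
    intro j
    have h := hC₁ (Polynomial.X ^ j : ℂ[X]) 1 (fun z hz => by
      simp only [eval_pow, eval_X, norm_pow]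
      exact pow_le_one₀ (norm_nonneg z) hz)
    simpa [map_pow] using h
  have hT2pow : ∀ j : ℕ, ‖(T₂ ^ j : H₂ →L[ℂ] H₂)‖ ≤ C₂ := by
    intro j
    have h := hC₂ (Polynomial.X ^ j : ℂ[X]) 1 (fun z hz => by
      simp only [eval_pow, eval_X, norm_pow]
      exact pow_le_one₀ (norm_nonneg z) hz)
    simpa [map_pow] using h
  have hcoef : ∀ n : ℕ, ‖p.coeff n‖ ≤ B := cauchy_coeff_le p B hB
  have hq : ∀ j : ℕ, ∀ z : ℂ, ‖z‖ ≤ 1 →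
      ‖(Polynomial.divX^[j+1] p).eval z‖ ≤ ((j : ℝ) + 2) * B := by
    intro j
    apply max_modulus_poly
    intro z hz
    have hzpow : ‖z ^ (j + 1)‖ = 1 := by rw [norm_pow, hz, one_pow]
    have hnorm : ‖(Polynomial.divX^[j+1] p).eval z‖
        = ‖z ^ (j + 1) * (Polynomial.divX^[j+1] p).eval z‖ := by
      rw [norm_mul, hzpow, one_mul]
    rw [hnorm, eval_divX_iterate]
    have hsumb : ‖∑ m ∈ range (j + 1), p.coeff m * z ^ m‖ ≤ ((j : ℝ) + 1) * B := by
      calc ‖∑ m ∈ range (j + 1), p.coeff m * z ^ m‖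
          ≤ ∑ m ∈ range (j + 1), ‖p.coeff m * z ^ m‖ := norm_sum_le _ _
        _ ≤ ∑ _m ∈ range (j + 1), B := by
            apply Finset.sum_le_sum
            intro m _
            rw [norm_mul, norm_pow, hz, one_pow, mul_one]
            exact hcoef m
        _ = ((j : ℝ) + 1) * B := by
            rw [Finset.sum_const, card_range, nsmul_eq_mul]
            push_cast; ring
    calc ‖p.eval z - ∑ m ∈ range (j + 1), p.coeff m * z ^ m‖
        ≤ ‖p.eval z‖ + ‖∑ m ∈ range (j + 1), p.coeff m * z ^ m‖ := norm_sub_le _ _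
      _ ≤ B + ((j : ℝ) + 1) * B := add_le_add (hB z hz.le) hsumb
      _ = ((j : ℝ) + 2) * B := by ring
  have hXnn : (0 : ℝ) ≤ ‖X‖ := norm_nonneg X
  -- bound each term in the first sum
  have hterm1 : ∀ j ∈ range N,
      ‖(T₁ ^ j).comp (X.comp (Polynomial.aeval T₂ (Polynomial.divX^[j+1] p)))‖
        ≤ C₁ * (‖X‖ * (C₂ * (((N : ℝ) + 2) * B))) := by
    intro j hj
    have hjN : ((j : ℝ) + 2) * B ≤ ((N : ℝ) + 2) * B := by
      have : (j : ℝ) ≤ (N : ℝ) := by exact_mod_cast (mem_range.mp hj).le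
      nlinarith
    have haev : ‖(Polynomial.aeval T₂ (Polynomial.divX^[j+1] p) : H₂ →L[ℂ] H₂)‖
        ≤ C₂ * (((N : ℝ) + 2) * B) := by
      refine (hC₂ _ _ (hq j)).trans ?_
      nlinarith
    calc ‖(T₁ ^ j).comp (X.comp (Polynomial.aeval T₂ (Polynomial.divX^[j+1] p)))‖
        ≤ ‖(T₁ ^ j : H₁ →L[ℂ] H₁)‖ * ‖X.comp (Polynomial.aeval T₂ (Polynomial.divX^[j+1] p))‖ :=
          ContinuousLinearMap.opNorm_comp_le _ _
      _ ≤ ‖(T₁ ^ j : H₁ →L[ℂ] H₁)‖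
            * (‖X‖ * ‖(Polynomial.aeval T₂ (Polynomial.divX^[j+1] p) : H₂ →L[ℂ] H₂)‖) := by
          gcongr
          exact ContinuousLinearMap.opNorm_comp_le _ _
      _ ≤ C₁ * (‖X‖ * (C₂ * (((N : ℝ) + 2) * B))) :=
          mul_le_mul (hT1pow j) (mul_le_mul_of_nonneg_left haev hXnn)
            (by positivity) hC₁pos.le
  have hterm2 : ∀ i ∈ range N,
      ‖((Polynomial.aeval T₁ (Polynomial.divX^[i+1] p) : H₁ →L[ℂ] H₁)).comp
          (X.comp (T₂ ^ i))‖ ≤ C₁ * (((N : ℝ) + 2) * B) * (‖X‖ * C₂) := by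
    intro i hi
    have hiN : ((i : ℝ) + 2) * B ≤ ((N : ℝ) + 2) * B := by
      have : (i : ℝ) ≤ (N : ℝ) := by exact_mod_cast (mem_range.mp hi).le
      nlinarith
    have haev : ‖(Polynomial.aeval T₁ (Polynomial.divX^[i+1] p) : H₁ →L[ℂ] H₁)‖
        ≤ C₁ * (((N : ℝ) + 2) * B) := by
      refine (hC₁ _ _ (hq i)).trans ?_
      nlinarith
    calc ‖((Polynomial.aeval T₁ (Polynomial.divX^[i+1] p) : H₁ →L[ℂ] H₁)).comp
          (X.comp (T₂ ^ i))‖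
        ≤ ‖(Polynomial.aeval T₁ (Polynomial.divX^[i+1] p) : H₁ →L[ℂ] H₁)‖
            * ‖X.comp (T₂ ^ i)‖ := ContinuousLinearMap.opNorm_comp_le _ _
      _ ≤ ‖(Polynomial.aeval T₁ (Polynomial.divX^[i+1] p) : H₁ →L[ℂ] H₁)‖
            * (‖X‖ * ‖(T₂ ^ i : H₂ →L[ℂ] H₂)‖) := by
          gcongr
          exact ContinuousLinearMap.opNorm_comp_le _ _
      _ ≤ C₁ * (((N : ℝ) + 2) * B) * (‖X‖ * C₂) :=
          mul_le_mul haev (mul_le_mul_of_nonneg_left (hT2pow i) hXnn)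
            (by positivity)
            (mul_nonneg hC₁pos.le (mul_nonneg (by positivity) hB0))
  have hterm3 : ∀ j ∈ range N, ∀ i ∈ range N,
      ‖p.coeff (i + j + 1) • eOp T₁ T₂ X j i‖ ≤ B * (C₁ * (‖X‖ * C₂)) := by
    intro j _ i _
    have heop : ‖eOp T₁ T₂ X j i‖ ≤ C₁ * (‖X‖ * C₂) := by
      calc ‖eOp T₁ T₂ X j i‖
          ≤ ‖(T₁ ^ j : H₁ →L[ℂ] H₁)‖ * ‖X.comp (T₂ ^ i)‖ :=
            ContinuousLinearMap.opNorm_comp_le _ _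
        _ ≤ ‖(T₁ ^ j : H₁ →L[ℂ] H₁)‖ * (‖X‖ * ‖(T₂ ^ i : H₂ →L[ℂ] H₂)‖) := by
            gcongr
            exact ContinuousLinearMap.opNorm_comp_le _ _
        _ ≤ C₁ * (‖X‖ * C₂) :=
            mul_le_mul (hT1pow j) (mul_le_mul_of_nonneg_left (hT2pow i) hXnn)
              (by positivity) hC₁pos.le
    refine (norm_smul_le (p.coeff (i + j + 1)) (eOp T₁ T₂ X j i)).trans ?_
    exact mul_le_mul (hcoef _) heop (norm_nonneg _) hB0
  have hδ : ‖deltaOp T₁ T₂ X p‖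
      ≤ (N : ℝ) * (C₁ * (‖X‖ * (C₂ * (((N : ℝ) + 2) * B))))
        + (N : ℝ) * (C₁ * (((N : ℝ) + 2) * B) * (‖X‖ * C₂))
        + (N : ℝ) * ((N : ℝ) * (B * (C₁ * (‖X‖ * C₂)))) := by
    rw [deltaOp_eq T₁ T₂ X N hX p]
    have hb1 : ‖∑ j ∈ range N,
        (T₁ ^ j).comp (X.comp (Polynomial.aeval T₂ (Polynomial.divX^[j+1] p)))‖
        ≤ (N : ℝ) * (C₁ * (‖X‖ * (C₂ * (((N : ℝ) + 2) * B)))) := by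
      refine (norm_sum_le _ _).trans ?_
      refine (Finset.sum_le_sum hterm1).trans ?_
      rw [Finset.sum_const, card_range, nsmul_eq_mul]
    have hb2 : ‖∑ i ∈ range N,
        ((Polynomial.aeval T₁ (Polynomial.divX^[i+1] p) : H₁ →L[ℂ] H₁)).comp
          (X.comp (T₂ ^ i))‖
        ≤ (N : ℝ) * (C₁ * (((N : ℝ) + 2) * B) * (‖X‖ * C₂)) := by
      refine (norm_sum_le _ _).trans ?_
      refine (Finset.sum_le_sum hterm2).trans ?_
      rw [Finset.sum_const, card_range, nsmul_eq_mul]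
    have hb3 : ‖∑ j ∈ range N, ∑ i ∈ range N,
        p.coeff (i + j + 1) • eOp T₁ T₂ X j i‖
        ≤ (N : ℝ) * ((N : ℝ) * (B * (C₁ * (‖X‖ * C₂)))) := by
      refine (norm_sum_le _ _).trans ?_
      have : ∀ j ∈ range N, ‖∑ i ∈ range N, p.coeff (i + j + 1) • eOp T₁ T₂ X j i‖
          ≤ (N : ℝ) * (B * (C₁ * (‖X‖ * C₂))) := by
        intro j hj
        refine (norm_sum_le _ _).trans ?_
        refine (Finset.sum_le_sum (hterm3 j hj)).trans ?_
        rw [Finset.sum_const, card_range, nsmul_eq_mul]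
      refine (Finset.sum_le_sum this).trans ?_
      rw [Finset.sum_const, card_range, nsmul_eq_mul]
    calc ‖(∑ j ∈ range N,
          (T₁ ^ j).comp (X.comp (Polynomial.aeval T₂ (Polynomial.divX^[j+1] p))))
        + (∑ i ∈ range N,
          ((Polynomial.aeval T₁ (Polynomial.divX^[i+1] p) : H₁ →L[ℂ] H₁)).comp
            (X.comp (T₂ ^ i)))
        - ∑ j ∈ range N, ∑ i ∈ range N, p.coeff (i + j + 1) • eOp T₁ T₂ X j i‖
        ≤ ‖(∑ j ∈ range N,
          (T₁ ^ j).comp (X.comp (Polynomial.aeval T₂ (Polynomial.divX^[j+1] p))))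
        + (∑ i ∈ range N,
          ((Polynomial.aeval T₁ (Polynomial.divX^[i+1] p) : H₁ →L[ℂ] H₁)).comp
            (X.comp (T₂ ^ i)))‖
        + ‖∑ j ∈ range N, ∑ i ∈ range N, p.coeff (i + j + 1) • eOp T₁ T₂ X j i‖ :=
          norm_sub_le _ _
      _ ≤ _ := by
          refine add_le_add (le_trans (norm_add_le _ _) (add_le_add hb1 hb2)) hb3
  have hR : ((T₁.comp (ContinuousLinearMap.fst ℂ H₁ H₂) +
          X.comp (ContinuousLinearMap.snd ℂ H₁ H₂))).prod
        (T₂.comp (ContinuousLinearMap.snd ℂ H₁ H₂)) = triOp T₁ X T₂ := rfl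
  rw [hR, aeval_triOp]
  refine (triOp_norm_le _ _ _).trans ?_
  have ha1 : ‖(Polynomial.aeval T₁ p : H₁ →L[ℂ] H₁)‖ ≤ C₁ * B := hC₁ p B hB
  have ha2 : ‖(Polynomial.aeval T₂ p : H₂ →L[ℂ] H₂)‖ ≤ C₂ * B := hC₂ p B hB
  have hNnn : (0 : ℝ) ≤ (N : ℝ) := Nat.cast_nonneg N
  nlinarith [hδ, ha1, ha2, hB0, hC₁pos.le, hC₂pos.le, hXnn, hNnn,
    mul_nonneg (mul_nonneg hC₁pos.le hC₂pos.le) hB0,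
    mul_nonneg hNnn hNnn,
    mul_nonneg (mul_nonneg (mul_nonneg hC₁pos.le hC₂pos.le) hB0) hNnn,
    mul_nonneg (mul_nonneg (mul_nonneg (mul_nonneg hC₁pos.le hC₂pos.le) hB0) hNnn) hNnn]
end

section
/- Let A, B ∈ B(H) and suppose there exists an idempotent E ∈ B(H) (E² = E, E ≠ 0) with AB - BA = E. If H is infinite dimensional, then the kernel of E is infinite dimensional; equivalently, a nonzero idempotent with finite-dimensional kernel on an infinite-dimensional Hilbert space cannot be a commutator. -/
open Metric Set

namespace Stmt16Aux

set_option linter.unusedSectionVars false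

variable {H : Type*} [NormedAddCommGroup H] [NormedSpace ℂ H] [CompleteSpace H]

/-- The submodule of compact operators on `H`. -/
noncomputable abbrev K : Submodule ℂ (H →L[ℂ] H) := compactOperator (RingHom.id ℂ) H H

lemma isClosed_K : IsClosed ((K : Submodule ℂ (H →L[ℂ] H)) : Set (H →L[ℂ] H)) :=
  isClosed_setOf_isCompactOperator

lemma K_nonempty : ((K : Submodule ℂ (H →L[ℂ] H)) : Set (H →L[ℂ] H)).Nonempty :=
  ⟨0, Submodule.zero_mem _⟩

lemma mul_mem_K_left (X : H →L[ℂ] H) {Y : H →L[ℂ] H} (hY : Y ∈ K (H := H)) :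
    X * Y ∈ K (H := H) :=
  (hY : IsCompactOperator ⇑Y).clm_comp X

lemma mul_mem_K_right {X : H →L[ℂ] H} (hX : X ∈ K (H := H)) (Y : H →L[ℂ] H) :
    X * Y ∈ K (H := H) :=
  (hX : IsCompactOperator ⇑X).comp_clm Y

/-- The essential seminorm: distance to the compact operators. -/
noncomputable def rho (T : H →L[ℂ] H) : ℝ :=
  infDist T ((K : Submodule ℂ (H →L[ℂ] H)) : Set (H →L[ℂ] H))

lemma rho_nonneg (T : H →L[ℂ] H) : 0 ≤ rho T := infDist_nonneg

lemma rho_eq_zero_iff (T : H →L[ℂ] H) : rho T = 0 ↔ T ∈ K (H := H) :=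
  ((isClosed_K.mem_iff_infDist_zero K_nonempty).symm)

lemma exists_mem_dist_lt (T : H →L[ℂ] H) {ε : ℝ} (hε : 0 < ε) :
    ∃ a ∈ K (H := H), dist T a < rho T + ε := by
  have h : infDist T ((K : Submodule ℂ (H →L[ℂ] H)) : Set _) < rho T + ε := by
    simpa [rho] using lt_add_of_pos_right (rho T) hε
  exact (infDist_lt_iff K_nonempty).mp h

lemma rho_add_le (X Y : H →L[ℂ] H) : rho (X + Y) ≤ rho X + rho Y := by
  refine le_of_forall_pos_le_add fun ε hε => ?_
  obtain ⟨a, ha, hda⟩ := exists_mem_dist_lt X (half_pos hε)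
  obtain ⟨b, hb, hdb⟩ := exists_mem_dist_lt Y (half_pos hε)
  calc rho (X + Y) ≤ dist (X + Y) (a + b) :=
        infDist_le_dist_of_mem (Submodule.add_mem _ ha hb)
    _ ≤ dist X a + dist Y b := dist_add_add_le _ _ _ _
    _ ≤ rho X + rho Y + ε := by linarith

lemma rho_neg (X : H →L[ℂ] H) : rho (-X) = rho X := by
  have key : ∀ Z : H →L[ℂ] H, rho (-Z) ≤ rho Z := by
    intro Z
    refine le_of_forall_pos_le_add fun ε hε => ?_
    obtain ⟨a, ha, hda⟩ := exists_mem_dist_lt Z hε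
    calc rho (-Z) ≤ dist (-Z) (-a) := infDist_le_dist_of_mem (Submodule.neg_mem _ ha)
      _ = dist Z a := dist_neg_neg _ _
      _ ≤ rho Z + ε := le_of_lt hda
  have h1 := key X
  have h2 := key (-X)
  rw [neg_neg] at h2
  linarith

lemma rho_sub_le (X Y : H →L[ℂ] H) : rho (X - Y) ≤ rho X + rho Y := by
  rw [sub_eq_add_neg]
  calc rho (X + -Y) ≤ rho X + rho (-Y) := rho_add_le _ _
    _ = rho X + rho Y := by rw [rho_neg]

lemma rho_of_mem {T : H →L[ℂ] H} (h : T ∈ K (H := H)) : rho T = 0 :=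
  (rho_eq_zero_iff T).mpr h

lemma rho_sub_mem {X T : H →L[ℂ] H} (h : T ∈ K (H := H)) : rho (X - T) = rho X := by
  have h1 : rho (X - T) ≤ rho X := by
    calc rho (X - T) ≤ rho X + rho T := rho_sub_le _ _
      _ = rho X := by rw [rho_of_mem h, add_zero]
  have h2 : rho X ≤ rho (X - T) := by
    have hXT : X = X - T + T := by abel
    calc rho X = rho (X - T + T) := by rw [← hXT]
      _ ≤ rho (X - T) + rho T := rho_add_le _ _
      _ = rho (X - T) := by rw [rho_of_mem h, add_zero]
  linarith

lemma rho_mul_le_left (X Y : H →L[ℂ] H) : rho (X * Y) ≤ ‖X‖ * rho Y := by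
  refine le_of_forall_pos_le_add fun ε hε => ?_
  have hd : 0 < ε / (‖X‖ + 1) := div_pos hε (by positivity)
  obtain ⟨b, hb, hdb⟩ := exists_mem_dist_lt Y hd
  have hXb : X * b ∈ K (H := H) := mul_mem_K_left X hb
  have hnorm : dist (X * Y) (X * b) ≤ ‖X‖ * dist Y b := by
    rw [dist_eq_norm, dist_eq_norm, ← mul_sub]
    exact norm_mul_le _ _
  have hX0 : (0:ℝ) ≤ ‖X‖ := norm_nonneg _
  calc rho (X * Y) ≤ dist (X * Y) (X * b) := infDist_le_dist_of_mem hXb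
    _ ≤ ‖X‖ * dist Y b := hnorm
    _ ≤ ‖X‖ * (rho Y + ε / (‖X‖ + 1)) := by nlinarith
    _ ≤ ‖X‖ * rho Y + ε := by
        have : ‖X‖ * (ε / (‖X‖ + 1)) ≤ ε := by
          rw [mul_div_assoc'] ; rw [div_le_iff₀ (by positivity)] ; nlinarith
        nlinarith [rho_nonneg Y]

lemma rho_mul_le_right (X Y : H →L[ℂ] H) : rho (X * Y) ≤ rho X * ‖Y‖ := by
  refine le_of_forall_pos_le_add fun ε hε => ?_
  have hd : 0 < ε / (‖Y‖ + 1) := div_pos hε (by positivity)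
  obtain ⟨a, ha, hda⟩ := exists_mem_dist_lt X hd
  have haY : a * Y ∈ K (H := H) := mul_mem_K_right ha Y
  have hnorm : dist (X * Y) (a * Y) ≤ dist X a * ‖Y‖ := by
    rw [dist_eq_norm, dist_eq_norm, ← sub_mul]
    exact norm_mul_le _ _
  have hY0 : (0:ℝ) ≤ ‖Y‖ := norm_nonneg _
  calc rho (X * Y) ≤ dist (X * Y) (a * Y) := infDist_le_dist_of_mem haY
    _ ≤ dist X a * ‖Y‖ := hnorm
    _ ≤ (rho X + ε / (‖Y‖ + 1)) * ‖Y‖ := by nlinarith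
    _ ≤ rho X * ‖Y‖ + ε := by
        have : (ε / (‖Y‖ + 1)) * ‖Y‖ ≤ ε := by
          rw [div_mul_eq_mul_div, div_le_iff₀ (by positivity)] ; nlinarith
        nlinarith [rho_nonneg X]

lemma le_rho_smul {c : ℂ} (hc : c ≠ 0) (X : H →L[ℂ] H) :
    ‖c‖ * rho X ≤ rho (c • X) := by
  refine le_of_forall_pos_le_add fun ε hε => ?_
  obtain ⟨a, ha, hda⟩ := exists_mem_dist_lt (c • X) hε
  have hmem : c⁻¹ • a ∈ K (H := H) := Submodule.smul_mem _ _ ha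
  have hkey : dist X (c⁻¹ • a) = ‖c‖⁻¹ * dist (c • X) a := by
    rw [dist_eq_norm, dist_eq_norm]
    have hXa : X - c⁻¹ • a = c⁻¹ • (c • X - a) := by
      rw [smul_sub, smul_smul, inv_mul_cancel₀ hc, one_smul]
    rw [hXa, norm_smul c⁻¹ (c • X - a), norm_inv]
  have h1 : rho X ≤ ‖c‖⁻¹ * dist (c • X) a := by
    rw [← hkey]; exact infDist_le_dist_of_mem hmem
  have hc0 : (0:ℝ) < ‖c‖ := norm_pos_iff.mpr hc
  calc ‖c‖ * rho X ≤ ‖c‖ * (‖c‖⁻¹ * dist (c • X) a) := by nlinarith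
    _ = dist (c • X) a := by rw [← mul_assoc, mul_inv_cancel₀ hc0.ne', one_mul]
    _ ≤ rho (c • X) + ε := le_of_lt hda

lemma isCompactOperator_of_finiteDimensional_range (T : H →L[ℂ] H)
    (hfin : FiniteDimensional ℂ (LinearMap.range (T : H →ₗ[ℂ] H))) : IsCompactOperator ⇑T := by
  set S := LinearMap.range (T : H →ₗ[ℂ] H) with hS
  haveI := hfin
  haveI : ProperSpace S := FiniteDimensional.proper ℂ S
  refine ⟨Subtype.val '' Metric.closedBall (0 : S) ‖T‖, ?_, ?_⟩
  · exact (isCompact_closedBall _ _).image continuous_subtype_val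
  · refine Filter.mem_of_superset (Metric.closedBall_mem_nhds (0 : H) one_pos) ?_
    intro x hx
    refine ⟨⟨T x, LinearMap.mem_range_self _ x⟩, ?_, rfl⟩
    rw [Metric.mem_closedBall, dist_zero_right]
    have hx1 : ‖x‖ ≤ 1 := by simpa [dist_zero_right] using hx
    have hnn : ‖(⟨T x, LinearMap.mem_range_self _ x⟩ : S)‖ = ‖T x‖ := rfl
    rw [hnn]
    calc ‖T x‖ ≤ ‖T‖ * ‖x‖ := T.le_opNorm x
      _ ≤ ‖T‖ * 1 := by nlinarith [norm_nonneg T]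
      _ = ‖T‖ := mul_one _

lemma step_eq (A B E : H →L[ℂ] H) (hcomm : A * B - B * A = E) (n : ℕ) (c : ℂ) :
    A * B ^ (n + 2) - B ^ (n + 2) * A - (c + 1) • B ^ (n + 1) =
      (A * B ^ (n + 1) - B ^ (n + 1) * A - c • B ^ n) * B + B ^ (n + 1) * E - B ^ (n + 1) := by
  rw [← hcomm]
  simp only [mul_sub, sub_mul, smul_mul_assoc, pow_succ, mul_assoc, add_smul, one_smul]
  abel

end Stmt16Aux

open Stmt16Aux Metric in
/-- On an infinite-dimensional Hilbert space, a nonzero idempotent that is a commutator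
must have infinite-dimensional kernel. -/
theorem stmt_16 {H : Type*} [NormedAddCommGroup H] [InnerProductSpace ℂ H]
    [CompleteSpace H] (hinf : ¬ FiniteDimensional ℂ H)
    (A B E : H →L[ℂ] H) (hE : E * E = E) (hE0 : E ≠ 0)
    (hcomm : A * B - B * A = E) :
    ¬ FiniteDimensional ℂ (LinearMap.ker (E : H →ₗ[ℂ] H)) := by
  intro hfin
  -- `1 - E` has finite rank, hence is compact
  have hrange : LinearMap.range (((1 : H →L[ℂ] H) - E) : H →ₗ[ℂ] H) ≤ LinearMap.ker (E : H →ₗ[ℂ] H) := by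
    rintro x ⟨y, rfl⟩
    have h2 : E (E y) = E y := by
      have := congrArg (fun T : H →L[ℂ] H => T y) hE
      simpa using this
    simp [LinearMap.mem_ker, ContinuousLinearMap.sub_apply, map_sub, h2]
  haveI hfr : FiniteDimensional ℂ (LinearMap.range (((1 : H →L[ℂ] H) - E) : H →ₗ[ℂ] H)) :=
    Submodule.finiteDimensional_of_le hrange
  have hFcomp : ((1 : H →L[ℂ] H) - E) ∈ K (H := H) :=
    isCompactOperator_of_finiteDimensional_range _ hfr
  -- the commutator identity modulo compacts
  have key : ∀ n : ℕ,
      (A * B ^ (n + 1) - B ^ (n + 1) * A - ((n : ℂ) + 1) • B ^ n) ∈ K (H := H) := by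
    intro n
    induction n with
    | zero =>
      have he : A * B ^ (0 + 1) - B ^ (0 + 1) * A - (((0:ℕ) : ℂ) + 1) • B ^ 0 =
          -((1 : H →L[ℂ] H) - E) := by
        rw [pow_one, pow_zero]
        simp only [Nat.cast_zero, zero_add, one_smul]
        rw [hcomm, neg_sub]
      rw [he]
      exact Submodule.neg_mem _ hFcomp
    | succ n ih =>
      have he := step_eq A B E hcomm n ((n : ℂ) + 1)
      have hmem : ((A * B ^ (n + 1) - B ^ (n + 1) * A - ((n : ℂ) + 1) • B ^ n) * B +
          B ^ (n + 1) * E - B ^ (n + 1)) ∈ K (H := H) := by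
        have h1 := mul_mem_K_right ih B
        have h2 : (B ^ (n + 1) * E - B ^ (n + 1) : H →L[ℂ] H) =
            -(B ^ (n + 1) * (1 - E)) := by
          rw [mul_sub, mul_one, neg_sub]
        have h3 : B ^ (n + 1) * ((1 : H →L[ℂ] H) - E) ∈ K (H := H) :=
          mul_mem_K_left _ hFcomp
        have heq : ((A * B ^ (n + 1) - B ^ (n + 1) * A - ((n : ℂ) + 1) • B ^ n) * B +
            B ^ (n + 1) * E - B ^ (n + 1)) =
            (A * B ^ (n + 1) - B ^ (n + 1) * A - ((n : ℂ) + 1) • B ^ n) * B +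
            (B ^ (n + 1) * E - B ^ (n + 1)) := by abel
        rw [heq, h2]
        exact Submodule.add_mem _ h1 (Submodule.neg_mem _ h3)
      have hcast : (((n + 1 : ℕ)) : ℂ) + 1 = ((n : ℂ) + 1) + 1 := by push_cast; ring
      rw [show n + 1 + 1 = n + 2 from rfl, hcast, he]
      exact hmem
  -- growth bound on the essential seminorm
  have growth : ∀ n : ℕ, ((n : ℝ) + 1) * rho (B ^ n) ≤ 2 * ‖A‖ * ‖B‖ * rho (B ^ n) := by
    intro n
    have hceq : ((n : ℂ) + 1) = (((n + 1 : ℕ)) : ℂ) := by push_cast; ring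
    have hc : ((n : ℂ) + 1) ≠ 0 := by
      rw [hceq]; exact_mod_cast Nat.succ_ne_zero n
    have hnorm : ‖((n : ℂ) + 1)‖ = (n : ℝ) + 1 := by
      rw [hceq, Complex.norm_natCast]; push_cast; ring
    have h1 : ‖((n : ℂ) + 1)‖ * rho (B ^ n) ≤ rho (((n : ℂ) + 1) • B ^ n) :=
      le_rho_smul hc _
    have h2 : rho (((n : ℂ) + 1) • B ^ n) = rho (A * B ^ (n + 1) - B ^ (n + 1) * A) := by
      have heq : ((n : ℂ) + 1) • B ^ n = (A * B ^ (n + 1) - B ^ (n + 1) * A) -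
          (A * B ^ (n + 1) - B ^ (n + 1) * A - ((n : ℂ) + 1) • B ^ n) :=
        (sub_sub_cancel _ _).symm
      rw [heq, rho_sub_mem (key n)]
    have h3 := rho_sub_le (A * B ^ (n + 1)) (B ^ (n + 1) * A)
    have h4 := rho_mul_le_left A (B ^ (n + 1))
    have h5 := rho_mul_le_right (B ^ (n + 1)) A
    have h6 : rho (B ^ (n + 1)) ≤ rho (B ^ n) * ‖B‖ := by
      rw [pow_succ]; exact rho_mul_le_right _ _
    have hA := norm_nonneg A
    have hB := norm_nonneg B
    have hr := rho_nonneg (B ^ n)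
    have hr1 := rho_nonneg (B ^ (n + 1))
    rw [hnorm] at h1
    nlinarith
  -- some power of B is compact
  have hex : ∃ n : ℕ, rho (B ^ n) = 0 := by
    by_contra hcon
    push_neg at hcon
    obtain ⟨n, hn⟩ := exists_nat_gt (2 * ‖A‖ * ‖B‖)
    have hpos : 0 < rho (B ^ n) := lt_of_le_of_ne (rho_nonneg _) (Ne.symm (hcon n))
    have := growth n
    nlinarith
  obtain ⟨n, hn⟩ := hex
  have hBn : (B ^ n) ∈ K (H := H) := (rho_eq_zero_iff _).mp hn
  -- descend: then the identity is compact
  have desc : ∀ m : ℕ, (B ^ m) ∈ K (H := H) → ((1 : H →L[ℂ] H) ∈ K (H := H)) := by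
    intro m
    induction m with
    | zero => intro h; simpa using h
    | succ m ih =>
      intro h
      apply ih
      have hceq : ((m : ℂ) + 1) = (((m + 1 : ℕ)) : ℂ) := by push_cast; ring
      have hc : ((m : ℂ) + 1) ≠ 0 := by
        rw [hceq]; exact_mod_cast Nat.succ_ne_zero m
      have hmem : (((m : ℂ) + 1) • B ^ m) ∈ K (H := H) := by
        have heq : ((m : ℂ) + 1) • B ^ m = (A * B ^ (m + 1) - B ^ (m + 1) * A) -
            (A * B ^ (m + 1) - B ^ (m + 1) * A - ((m : ℂ) + 1) • B ^ m) :=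
          (sub_sub_cancel _ _).symm
        rw [heq]
        exact Submodule.sub_mem _
          (Submodule.sub_mem _ (mul_mem_K_left A h) (mul_mem_K_right h A)) (key m)
      have hBm : B ^ m = ((m : ℂ) + 1)⁻¹ • (((m : ℂ) + 1) • B ^ m) := by
        rw [smul_smul, inv_mul_cancel₀ hc, one_smul]
      rw [hBm]
      exact Submodule.smul_mem _ _ hmem
  have hone : IsCompactOperator ⇑(1 : H →L[ℂ] H) := desc n hBn
  -- the identity compact forces H finite dimensional, contradiction
  obtain ⟨C, hC, hCmem⟩ := hone
  have hid : ⇑(1 : H →L[ℂ] H) ⁻¹' C = C := by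
    ext x; simp [ContinuousLinearMap.one_apply]
  rw [hid] at hCmem
  obtain ⟨r, hr, hball⟩ := Metric.mem_nhds_iff.mp hCmem
  have hcb : Metric.closedBall (0 : H) (r / 2) ⊆ C :=
    (Metric.closedBall_subset_ball (half_lt_self hr)).trans hball
  have : FiniteDimensional ℂ H :=
    FiniteDimensional.of_isCompact_closedBall₀ ℂ (half_pos hr)
      (hC.of_isClosed_subset Metric.isClosed_closedBall hcb)
  exact hinf this
end
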